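/- For every ρ > 0, lim_{z→∞} √(2π z³) θ_ρ(z) = K_0(ρ), where θ_ρ(z) = (ρ/√(2π³z)) ∫_0^∞ exp((π²-y²)/(2z)) exp(-ρ cosh y) sinh y sin(πy/z) dy and K_0 is the modified Bessel function of the third kind of index 0. -/

import Mathlib

open Real Filter MeasureTheory

/-- The (unnormalized) Hartman–Watson density `θ_ρ(z)`. -/
noncomputable def hartmanWatson (ρ z : ℝ) : ℝ :=
  ρ / Real.sqrt (2 * Real.pi ^ 3 * z) *
    ∫ y in Set.Ioi (0 : ℝ),
      Real.exp ((Real.pi ^ 2 - y ^ 2) / (2 * z)) * Real.exp (-(ρ * Real.cosh y)) *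
        Real.sinh y * Real.sin (Real.pi * y / z)

/-- The Macdonald function `K_0(ρ) = ∫_0^∞ e^{-ρ cosh y} dy`. -/
noncomputable def besselK0 (ρ : ℝ) : ℝ :=
  ∫ y in Set.Ioi (0 : ℝ), Real.exp (-(ρ * Real.cosh y))

lemma hw_key_bound {ρ t : ℝ} (hρ : 0 < ρ) (ht : 0 ≤ t) :
    ρ * t ^ 2 * Real.exp (-(ρ * t)) ≤ 16 / ρ * Real.exp (-(ρ / 2 * t)) := by
  have hE := Real.exp_pos (ρ / 4 * t)
  have h1 : ρ * t ≤ 4 * Real.exp (ρ / 4 * t) := by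
    have h := Real.add_one_le_exp (ρ / 4 * t)
    linarith
  have h2 : (ρ * t) ^ 2 ≤ 16 * Real.exp (ρ / 4 * t) ^ 2 := by
    have h0 : 0 ≤ ρ * t := by positivity
    nlinarith
  have h3 : Real.exp (ρ / 4 * t) ^ 2 * Real.exp (-(ρ * t)) = Real.exp (-(ρ / 2 * t)) := by
    rw [sq, ← Real.exp_add, ← Real.exp_add]; ring_nf
  rw [div_mul_eq_mul_div, le_div_iff₀ hρ]
  calc ρ * t ^ 2 * Real.exp (-(ρ * t)) * ρ = (ρ * t) ^ 2 * Real.exp (-(ρ * t)) := by ring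
    _ ≤ 16 * Real.exp (ρ / 4 * t) ^ 2 * Real.exp (-(ρ * t)) := by
        have := Real.exp_pos (-(ρ * t)); nlinarith
    _ = 16 * Real.exp (-(ρ / 2 * t)) := by rw [mul_assoc, h3]

lemma hw_integrand_bound {ρ : ℝ} (hρ : 0 < ρ) {y : ℝ} (hy : 0 ≤ y) :
    ρ * (y * Real.sinh y * Real.exp (-(ρ * Real.cosh y))) ≤
      16 / ρ * Real.exp (-(ρ / 2 * y)) := by
  have hc1 : (1 : ℝ) ≤ Real.cosh y := Real.one_le_cosh y
  have hsy : y ≤ Real.sinh y := Real.self_le_sinh_iff.mpr hy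
  have hsc : Real.sinh y ≤ Real.cosh y := (Real.sinh_lt_cosh y).le
  have hsn : 0 ≤ Real.sinh y := Real.sinh_nonneg_iff.mpr hy
  have hE := Real.exp_pos (-(ρ * Real.cosh y))
  have hss : y * Real.sinh y ≤ Real.cosh y ^ 2 := by nlinarith
  have h1 : ρ * (y * Real.sinh y * Real.exp (-(ρ * Real.cosh y))) ≤
      ρ * Real.cosh y ^ 2 * Real.exp (-(ρ * Real.cosh y)) := by
    nlinarith [mul_le_mul_of_nonneg_right hss hE.le]
  have h2 := hw_key_bound hρ (le_trans zero_le_one hc1)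
  have h3 : Real.exp (-(ρ / 2 * Real.cosh y)) ≤ Real.exp (-(ρ / 2 * y)) := by
    apply Real.exp_le_exp.mpr; nlinarith
  have h4 : 16 / ρ * Real.exp (-(ρ / 2 * Real.cosh y)) ≤ 16 / ρ * Real.exp (-(ρ / 2 * y)) := by
    have h5 : (0:ℝ) ≤ 16 / ρ := by positivity
    exact mul_le_mul_of_nonneg_left h3 h5
  linarith

lemma hw_integrable_bound {ρ : ℝ} (hρ : 0 < ρ) :
    IntegrableOn (fun y => 16 / ρ * Real.exp (-(ρ / 2 * y))) (Set.Ioi (0 : ℝ)) := by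
  have := (exp_neg_integrableOn_Ioi 0 (half_pos hρ)).const_mul (16 / ρ)
  have h2 : Integrable (fun y => 16 / ρ * Real.exp (-(ρ / 2 * y))) (volume.restrict (Set.Ioi (0:ℝ))) := by
    simpa [neg_mul] using this
  exact h2

lemma hw_integrable_g {ρ : ℝ} (hρ : 0 < ρ) :
    IntegrableOn (fun y => Real.exp (-(ρ * Real.cosh y))) (Set.Ioi (0 : ℝ)) := by
  apply (exp_neg_integrableOn_Ioi 0 hρ).mono'
  · exact (Real.continuous_exp.comp
      (continuous_const.mul Real.continuous_cosh).neg).aestronglyMeasurable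
  · filter_upwards [ae_restrict_mem measurableSet_Ioi] with y hy
    have hy0 : (0:ℝ) ≤ y := (Set.mem_Ioi.mp hy).le
    have hyc : y ≤ Real.cosh y :=
      (Real.self_le_sinh_iff.mpr hy0).trans (Real.sinh_lt_cosh y).le
    rw [Real.norm_eq_abs, abs_of_pos (Real.exp_pos _)]
    apply Real.exp_le_exp.mpr
    rw [neg_mul]
    nlinarith

lemma hw_integrable_h {ρ : ℝ} (hρ : 0 < ρ) :
    IntegrableOn (fun y => ρ * (y * Real.sinh y * Real.exp (-(ρ * Real.cosh y))))
      (Set.Ioi (0 : ℝ)) := by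
  apply (hw_integrable_bound hρ).mono'
  · apply Continuous.aestronglyMeasurable
    continuity
  · filter_upwards [ae_restrict_mem measurableSet_Ioi] with y hy
    have hy0 : (0:ℝ) ≤ y := (Set.mem_Ioi.mp hy).le
    have h1 := hw_integrand_bound hρ hy0
    have hs : 0 ≤ Real.sinh y := Real.sinh_nonneg_iff.mpr hy0
    rw [Real.norm_eq_abs, abs_of_nonneg (by positivity)]
    exact h1

lemma hw_parts {ρ : ℝ} (hρ : 0 < ρ) :
    ∫ y in Set.Ioi (0 : ℝ), ρ * (y * Real.sinh y * Real.exp (-(ρ * Real.cosh y)))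
      = besselK0 ρ := by
  have hderiv : ∀ y ∈ Set.Ici (0:ℝ),
      HasDerivAt (fun y => -(y * Real.exp (-(ρ * Real.cosh y))))
      (ρ * (y * Real.sinh y * Real.exp (-(ρ * Real.cosh y))) -
        Real.exp (-(ρ * Real.cosh y))) y := by
    intro y _
    have h1 : HasDerivAt (fun y => -(ρ * Real.cosh y)) (-(ρ * Real.sinh y)) y := by
      simpa using ((Real.hasDerivAt_cosh y).const_mul ρ).fun_neg
    have h2 : HasDerivAt (fun y => Real.exp (-(ρ * Real.cosh y)))
        (Real.exp (-(ρ * Real.cosh y)) * -(ρ * Real.sinh y)) y := h1.exp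
    have h3 : HasDerivAt (fun y => -(y * Real.exp (-(ρ * Real.cosh y))))
        (-(1 * Real.exp (-(ρ * Real.cosh y)) + y * (Real.exp (-(ρ * Real.cosh y)) * -(ρ * Real.sinh y)))) y :=
      ((hasDerivAt_id y).mul h2).neg
    convert h3 using 1
    ring
  have hint : IntegrableOn (fun y =>
      ρ * (y * Real.sinh y * Real.exp (-(ρ * Real.cosh y))) - Real.exp (-(ρ * Real.cosh y)))
      (Set.Ioi (0:ℝ)) := (hw_integrable_h hρ).sub (hw_integrable_g hρ)
  have htend : Tendsto (fun y => -(y * Real.exp (-(ρ * Real.cosh y)))) atTop (nhds 0) := by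
    rw [← neg_zero]
    apply Tendsto.neg
    apply squeeze_zero' (g := fun y => 4 / ρ * Real.exp (-(ρ / 2 * y)))
    · filter_upwards [eventually_ge_atTop 0] with y hy
      positivity
    · filter_upwards [eventually_ge_atTop 0] with y hy
      have hyc : y ≤ Real.cosh y :=
        (Real.self_le_sinh_iff.mpr hy).trans (Real.sinh_lt_cosh y).le
      have hc1 : (1:ℝ) ≤ Real.cosh y := Real.one_le_cosh y
      have hE := Real.exp_pos (-(ρ * Real.cosh y))
      have h1 : ρ * Real.cosh y ≤ 4 * Real.exp (ρ / 4 * Real.cosh y) := by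
        have h := Real.add_one_le_exp (ρ / 4 * Real.cosh y)
        linarith
      have h2 : Real.exp (ρ / 4 * Real.cosh y) * Real.exp (-(ρ * Real.cosh y)) ≤
          Real.exp (-(ρ / 2 * y)) := by
        rw [← Real.exp_add]
        apply Real.exp_le_exp.mpr
        nlinarith
      rw [div_mul_eq_mul_div, le_div_iff₀ hρ]
      have h3 : ρ * Real.cosh y * Real.exp (-(ρ * Real.cosh y)) ≤
          4 * (Real.exp (ρ / 4 * Real.cosh y) * Real.exp (-(ρ * Real.cosh y))) := by
        nlinarith
      have h4 : y * Real.exp (-(ρ * Real.cosh y)) * ρ ≤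
          ρ * Real.cosh y * Real.exp (-(ρ * Real.cosh y)) := by
        nlinarith [mul_le_mul_of_nonneg_right hyc (mul_pos hE hρ).le]
      have h5 : 4 * (Real.exp (ρ / 4 * Real.cosh y) * Real.exp (-(ρ * Real.cosh y))) ≤
          4 * Real.exp (-(ρ / 2 * y)) := by linarith
      linarith
    · rw [show (0:ℝ) = 4 / ρ * 0 by ring]
      apply Tendsto.const_mul
      apply Real.tendsto_exp_atBot.comp
      apply tendsto_neg_atTop_atBot.comp
      exact Tendsto.const_mul_atTop (half_pos hρ) tendsto_id
  have h0 := integral_Ioi_of_hasDerivAt_of_tendsto' hderiv hint htend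
  rw [MeasureTheory.integral_sub (hw_integrable_h hρ) (hw_integrable_g hρ)] at h0
  simp only [Real.cosh_zero, mul_one, zero_mul, neg_zero, sub_zero] at h0
  unfold besselK0
  linarith

/-- `lim_{z→∞} √(2π z³) θ_ρ(z) = K_0(ρ)`. -/
theorem hartmanWatson_tail_limit (ρ : ℝ) (hρ : 0 < ρ) :
    Tendsto (fun z : ℝ => Real.sqrt (2 * Real.pi * z ^ 3) * hartmanWatson ρ z)
      atTop (nhds (besselK0 ρ)) := by
  have hπ := Real.pi_pos
  have key : Tendsto (fun z : ℝ => ∫ y in Set.Ioi (0:ℝ),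
      ρ * z / Real.pi * (Real.exp ((Real.pi ^ 2 - y ^ 2) / (2 * z)) *
        Real.exp (-(ρ * Real.cosh y)) * Real.sinh y * Real.sin (Real.pi * y / z))) atTop
      (nhds (∫ y in Set.Ioi (0:ℝ),
        ρ * (y * Real.sinh y * Real.exp (-(ρ * Real.cosh y))))) := by
    apply tendsto_integral_filter_of_dominated_convergence
      (bound := fun y => Real.exp (Real.pi ^ 2 / 2) * (16 / ρ * Real.exp (-(ρ / 2 * y))))
    · filter_upwards with z
      apply Continuous.aestronglyMeasurable
      continuity
    · filter_upwards [eventually_ge_atTop 1] with z hz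
      filter_upwards [ae_restrict_mem measurableSet_Ioi] with y hy
      have hy0 : (0:ℝ) < y := hy
      have hz0 : (0:ℝ) < z := lt_of_lt_of_le one_pos hz
      have hS : 0 ≤ Real.sinh y := Real.sinh_nonneg_iff.mpr hy0.le
      set A := Real.exp ((Real.pi ^ 2 - y ^ 2) / (2 * z)) with hA
      have hApos : 0 < A := Real.exp_pos _
      have hgpos : 0 < Real.exp (-(ρ * Real.cosh y)) := Real.exp_pos _
      have habs : ‖ρ * z / Real.pi * (A * Real.exp (-(ρ * Real.cosh y)) * Real.sinh y *
          Real.sin (Real.pi * y / z))‖ = ρ * z / Real.pi *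
          (A * Real.exp (-(ρ * Real.cosh y)) * Real.sinh y * |Real.sin (Real.pi * y / z)|) := by
        rw [Real.norm_eq_abs, abs_mul, abs_of_pos (by positivity : (0:ℝ) < ρ * z / Real.pi),
          abs_mul, abs_of_nonneg (by positivity : (0:ℝ) ≤ A * Real.exp (-(ρ * Real.cosh y)) * Real.sinh y)]
      rw [habs]
      have hsin : |Real.sin (Real.pi * y / z)| ≤ Real.pi * y / z := by
        calc |Real.sin (Real.pi * y / z)| ≤ |Real.pi * y / z| := Real.abs_sin_le_abs
          _ = Real.pi * y / z := abs_of_pos (by positivity)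
      have hAle : A ≤ Real.exp (Real.pi ^ 2 / 2) := by
        apply Real.exp_le_exp.mpr
        rcases le_or_gt (Real.pi ^ 2 - y ^ 2) 0 with h | h
        · have h1 : (Real.pi ^ 2 - y ^ 2) / (2 * z) ≤ 0 :=
            div_nonpos_of_nonpos_of_nonneg h (by positivity)
          have h2 : (0:ℝ) ≤ Real.pi ^ 2 / 2 := by positivity
          linarith
        · have h1 : (Real.pi ^ 2 - y ^ 2) / (2 * z) ≤ (Real.pi ^ 2 - y ^ 2) / 2 :=
            div_le_div_of_nonneg_left h.le two_pos (by linarith)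
          have h2 : (Real.pi ^ 2 - y ^ 2) / 2 ≤ Real.pi ^ 2 / 2 := by nlinarith [sq_nonneg y]
          linarith
      calc ρ * z / Real.pi * (A * Real.exp (-(ρ * Real.cosh y)) * Real.sinh y *
              |Real.sin (Real.pi * y / z)|)
          ≤ ρ * z / Real.pi * (A * Real.exp (-(ρ * Real.cosh y)) * Real.sinh y *
              (Real.pi * y / z)) := by
            apply mul_le_mul_of_nonneg_left _ (by positivity : (0:ℝ) ≤ ρ * z / Real.pi)
            exact mul_le_mul_of_nonneg_left hsin (by positivity)
        _ = A * (ρ * (y * Real.sinh y * Real.exp (-(ρ * Real.cosh y)))) := by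
            field_simp
        _ ≤ Real.exp (Real.pi ^ 2 / 2) * (ρ * (y * Real.sinh y *
              Real.exp (-(ρ * Real.cosh y)))) := by
            apply mul_le_mul_of_nonneg_right hAle (by positivity)
        _ ≤ Real.exp (Real.pi ^ 2 / 2) * (16 / ρ * Real.exp (-(ρ / 2 * y))) := by
            apply mul_le_mul_of_nonneg_left (hw_integrand_bound hρ hy0.le) (by positivity)
    · exact (hw_integrable_bound hρ).const_mul _
    · filter_upwards [ae_restrict_mem measurableSet_Ioi] with y hy
      have hy0 : (0:ℝ) < y := hy
      have hA : Tendsto (fun z : ℝ => Real.exp ((Real.pi ^ 2 - y ^ 2) / (2 * z))) atTop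
          (nhds 1) := by
        rw [show (1:ℝ) = Real.exp 0 by simp]
        apply (Real.continuous_exp.tendsto 0).comp
        apply Tendsto.div_atTop tendsto_const_nhds
        exact Tendsto.const_mul_atTop two_pos tendsto_id
      have hslope : Tendsto (fun t : ℝ => Real.sin t / t) (nhdsWithin 0 {0}ᶜ) (nhds 1) := by
        have h := hasDerivAt_iff_tendsto_slope.mp (Real.hasDerivAt_sin 0)
        rw [Real.cos_zero] at h
        apply h.congr
        intro t
        simp [slope_def_field, Real.sin_zero]
      have htz : Tendsto (fun z : ℝ => Real.pi * y / z) atTop (nhdsWithin 0 {0}ᶜ) := by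
        apply tendsto_nhdsWithin_of_tendsto_nhds_of_eventually_within
        · exact Tendsto.div_atTop tendsto_const_nhds tendsto_id
        · filter_upwards [eventually_gt_atTop 0] with z hz
          simp only [Set.mem_compl_iff, Set.mem_singleton_iff]
          exact ne_of_gt (by positivity)
      have hB : Tendsto (fun z : ℝ => z / Real.pi * Real.sin (Real.pi * y / z)) atTop
          (nhds y) := by
        have hcomp := hslope.comp htz
        have h2 := hcomp.const_mul y
        rw [mul_one] at h2
        apply h2.congr'
        filter_upwards [eventually_gt_atTop 0] with z hz
        have hne : Real.pi * y / z ≠ 0 := ne_of_gt (by positivity)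
        rw [Function.comp_apply]
        field_simp
      have hC : Tendsto (fun z : ℝ => ρ * (Real.exp ((Real.pi ^ 2 - y ^ 2) / (2 * z)) *
          Real.exp (-(ρ * Real.cosh y)) * Real.sinh y)) atTop
          (nhds (ρ * (1 * Real.exp (-(ρ * Real.cosh y)) * Real.sinh y))) := by
        exact (((hA.mul_const _).mul_const _).const_mul ρ)
      have hfin := hC.mul hB
      have heq : ρ * (1 * Real.exp (-(ρ * Real.cosh y)) * Real.sinh y) * y =
          ρ * (y * Real.sinh y * Real.exp (-(ρ * Real.cosh y))) := by ring
      rw [heq] at hfin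
      exact hfin.congr (fun z => by ring)
  rw [hw_parts hρ] at key
  apply key.congr'
  filter_upwards [eventually_ge_atTop 1] with z hz
  have hz0 : (0:ℝ) < z := lt_of_lt_of_le one_pos hz
  unfold hartmanWatson
  rw [MeasureTheory.integral_const_mul]
  have hsq : Real.sqrt (2 * Real.pi * z ^ 3) = Real.sqrt (2 * Real.pi ^ 3 * z) * (z / Real.pi) := by
    rw [show 2 * Real.pi * z ^ 3 = (2 * Real.pi ^ 3 * z) * (z / Real.pi) ^ 2 by
      field_simp]
    rw [Real.sqrt_mul (by positivity), Real.sqrt_sq (by positivity)]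
  rw [hsq]
  have hne : Real.sqrt (2 * Real.pi ^ 3 * z) ≠ 0 := by positivity
  field_simp
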